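/- Let v₃ > 0, λ = v₃/2, and let (y, z, θ) solve y' = cos θ, z' = sin θ, θ' = v₃(1 + cos θ) with θ(0) = 0 and θ not constant. Then −π < θ(s) < π for all s, θ is strictly increasing, lim_{s→±∞} θ(s) = ±π, and for s > 0 one has y(s) = θ(s)/v₃ − s; in particular lim_{s→+∞} y(s) = −∞ and lim_{s→−∞} y(s) = +∞. -/

import Mathlib

open Filter Topology

private lemma lipF (v₃ : ℝ) (hv : 0 < v₃) :
    LipschitzWith v₃.toNNReal (fun x => v₃ * (1 + Real.cos x)) := by
  apply lipschitzWith_of_nnnorm_deriv_le (by fun_prop)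
  intro x
  have hd : HasDerivAt (fun x => v₃ * (1 + Real.cos x)) (v₃ * (0 + -Real.sin x)) x :=
    ((hasDerivAt_const x (1:ℝ)).add (Real.hasDerivAt_cos x)).const_mul v₃
  rw [← NNReal.coe_le_coe, coe_nnnorm, Real.coe_toNNReal _ hv.le, hd.deriv]
  rw [Real.norm_eq_abs, abs_mul, abs_of_pos hv]
  calc v₃ * |0 + -Real.sin x| = v₃ * |Real.sin x| := by rw [zero_add, abs_neg]
    _ ≤ v₃ * 1 := by nlinarith [Real.abs_sin_le_one x, abs_nonneg (Real.sin x)]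
    _ = v₃ := mul_one v₃

theorem stmt7 (v₃ : ℝ) (hv : 0 < v₃)
    (y z θ : ℝ → ℝ)
    (hy : ∀ s, HasDerivAt y (Real.cos (θ s)) s)
    (hz : ∀ s, HasDerivAt z (Real.sin (θ s)) s)
    (hθ : ∀ s, HasDerivAt θ (v₃ * (1 + Real.cos (θ s))) s)
    (hy0 : y 0 = 0) (hz0 : z 0 = 0) (hθ0 : θ 0 = 0)
    (hnc : ∃ s, θ s ≠ 0) :
    (∀ s, -Real.pi < θ s ∧ θ s < Real.pi) ∧
    StrictMono θ ∧
    Tendsto θ atTop (𝓝 Real.pi) ∧ Tendsto θ atBot (𝓝 (-Real.pi)) ∧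
    (∀ s, 0 < s → y s = θ s / v₃ - s) ∧
    Tendsto y atTop atBot ∧ Tendsto y atBot atTop := by
  set g : ℝ → ℝ := fun s => 2 * Real.arctan (v₃ * s) with hgdef
  have hgd : ∀ s, HasDerivAt g (v₃ * (1 + Real.cos (g s))) s := by
    intro s
    have h1 : HasDerivAt (fun s : ℝ => v₃ * s) v₃ s := by
      simpa using (hasDerivAt_id s).const_mul v₃
    have h2 : HasDerivAt g (2 * (1 / (1 + (v₃ * s) ^ 2) * v₃)) s :=
      ((Real.hasDerivAt_arctan (v₃ * s)).comp s h1).const_mul 2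
    convert h2 using 1
    have hpos : (0:ℝ) < 1 + (v₃ * s) ^ 2 := by positivity
    rw [hgdef]
    simp only [Real.cos_two_mul, Real.cos_sq_arctan]
    field_simp
    ring
  have lip := lipF v₃ hv
  have θeq : ∀ s, θ s = g s := by
    intro s
    have hmem : s ∈ Set.Ioo (-(|s| + 1)) (|s| + 1) :=
      ⟨by linarith [neg_abs_le s], by linarith [le_abs_self s]⟩
    have h0 : (0:ℝ) ∈ Set.Ioo (-(|s| + 1)) (|s| + 1) := by
      constructor <;> nlinarith [abs_nonneg s]
    exact ODE_solution_unique_of_mem_Ioo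
      (v := fun _ x => v₃ * (1 + Real.cos x)) (s := fun _ => Set.univ)
      (fun _ _ => lip.lipschitzOnWith) h0
      (fun t _ => ⟨hθ t, Set.mem_univ _⟩) (fun t _ => ⟨hgd t, Set.mem_univ _⟩)
      (by simp [hθ0, hgdef]) hmem
  have hθfun : θ = g := funext θeq
  have hbound : ∀ s, -Real.pi < θ s ∧ θ s < Real.pi := by
    intro s
    rw [θeq s]
    simp only [hgdef]
    have h1 := Real.neg_pi_div_two_lt_arctan (v₃ * s)
    have h2 := Real.arctan_lt_pi_div_two (v₃ * s)
    constructor <;> [nlinarith; nlinarith]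
  have hsm : StrictMono θ := by
    rw [hθfun]
    intro a b hab
    have := Real.arctan_strictMono (mul_lt_mul_of_pos_left hab hv)
    simpa [hgdef] using by linarith [mul_lt_mul_of_pos_left hab hv]
  have htop : Tendsto θ atTop (𝓝 Real.pi) := by
    rw [hθfun]
    have h1 : Tendsto (fun s : ℝ => v₃ * s) atTop atTop :=
      tendsto_id.const_mul_atTop hv
    have h2 : Tendsto (fun s : ℝ => Real.arctan (v₃ * s)) atTop (𝓝 (Real.pi / 2)) :=
      (Real.tendsto_arctan_atTop.mono_right nhdsWithin_le_nhds).comp h1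
    have := h2.const_mul (2:ℝ)
    simpa [hgdef, mul_div_cancel₀] using this
  have hbot : Tendsto θ atBot (𝓝 (-Real.pi)) := by
    rw [hθfun]
    have h1 : Tendsto (fun s : ℝ => v₃ * s) atBot atBot :=
      tendsto_id.const_mul_atBot hv
    have h2 : Tendsto (fun s : ℝ => Real.arctan (v₃ * s)) atBot (𝓝 (-(Real.pi / 2))) :=
      (Real.tendsto_arctan_atBot.mono_right nhdsWithin_le_nhds).comp h1
    have := h2.const_mul (2:ℝ)
    have hpi : 2 * -(Real.pi / 2) = -Real.pi := by ring
    simpa [hgdef, hpi] using this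
  have hyeq : ∀ s, y s = θ s / v₃ - s := by
    have hdh : ∀ s, HasDerivAt (fun s => y s - (θ s / v₃ - s)) 0 s := by
      intro s
      have h := (hy s).sub (((hθ s).div_const v₃).sub (hasDerivAt_id s))
      exact h.congr_deriv (by rw [mul_div_cancel_left₀ _ hv.ne']; ring)
    have hc : ∀ s, (fun s => y s - (θ s / v₃ - s)) s = (fun s => y s - (θ s / v₃ - s)) 0 :=
      fun s => is_const_of_deriv_eq_zero
        (fun t => (hdh t).differentiableAt) (fun t => (hdh t).deriv) s 0
    intro s
    have := hc s
    simp only [hy0, hθ0] at this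
    simp at this
    linarith [this]
  have hytop : Tendsto y atTop atBot := by
    have hb : Tendsto (fun s : ℝ => Real.pi / v₃ - s) atTop atBot := by
      have h : Tendsto (fun s : ℝ => -s) atTop atBot := tendsto_neg_atTop_atBot
      simpa [sub_eq_add_neg] using tendsto_atBot_add_const_left atTop (Real.pi / v₃) h
    apply tendsto_atBot_mono (fun s => ?_) hb
    rw [hyeq s]
    have h1 := (hbound s).2
    have h2 : θ s / v₃ ≤ Real.pi / v₃ := by
      apply div_le_div_of_nonneg_right ?_ hv.le
      linarith
    linarith
  have hybot : Tendsto y atBot atTop := by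
    have hb : Tendsto (fun s : ℝ => -Real.pi / v₃ - s) atBot atTop := by
      have h : Tendsto (fun s : ℝ => -s) atBot atTop := tendsto_neg_atBot_atTop
      simpa [sub_eq_add_neg] using tendsto_atTop_add_const_left atBot (-Real.pi / v₃) h
    apply tendsto_atTop_mono (fun s => ?_) hb
    rw [hyeq s]
    have h1 := (hbound s).1
    have h2 : -Real.pi / v₃ ≤ θ s / v₃ := by
      apply div_le_div_of_nonneg_right ?_ hv.le
      linarith
    linarith
  exact ⟨hbound, hsm, htop, hbot, fun s _ => hyeq s, hytop, hybot⟩
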